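/- Let f be an expanding map generating a full shift with distortion constant K. For each m, ε > 0, probability vector p̄, and each cylinder C ⊆ [0,1): liminf_{n→∞} N^s_∞(C ∩ G^{f,m}_{p̄}(n,ε)) ≥ |C|^s / K^{2s} for all 0 ≤ s < dim_H(G^{f,m}_{p̄}). -/

import Mathlib

open Set MeasureTheory Filter
open scoped ENNReal Classical

noncomputable section

/-- A similarity transformation of `ℝ`. -/
def IsSimilarity (f : ℝ → ℝ) : Prop := ∃ a b : ℝ, a ≠ 0 ∧ ∀ x, f x = a * x + b

/-- Falconer's class `𝒢^s`: Gδ sets all of whose images under countably many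
similarities intersect in a set of Hausdorff dimension at least `s`. -/
def falconerClass (s : ℝ) : Set (Set ℝ) :=
  {F | IsGδ F ∧ ∀ T : ℕ → ℝ → ℝ, (∀ i, IsSimilarity (T i)) →
    ENNReal.ofReal s ≤ dimH (⋂ i, T i '' F)}

/-- A probability vector indexed by a finite type. -/
def IsProbVector {ι : Type*} [Fintype ι] (p : ι → ℝ) : Prop :=
  (∀ i, 0 ≤ p i) ∧ ∑ i, p i = 1

/-- A dyadic half-open interval `[2^k m, 2^k (m+1))`. -/
def IsDyadic (I : Set ℝ) : Prop :=
  ∃ (k m : ℤ), I = Ico ((2:ℝ) ^ k * m) ((2:ℝ) ^ k * (m + 1))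

/-- The outer measure `M^s_∞` obtained from countable covers by dyadic intervals. -/
def dyadicMeasure (s : ℝ) (A : Set ℝ) : ℝ≥0∞ :=
  ⨅ (I : ℕ → Set ℝ) (_ : ∀ i, IsDyadic (I i)) (_ : A ⊆ ⋃ i, I i),
    ∑' i, volume (I i) ^ s

/-- Extension of a subset of `[0,1)` to `ℝ` by integer translations. -/
def periodize (A : Set ℝ) : Set ℝ := ⋃ k : ℤ, (fun x => x + (k : ℝ)) '' A

/-- An expanding interval map on `[0,1)` with `g` full monotone branches,
generating a full shift on `g` symbols. -/
structure ExpandingFullShift where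
  g : ℕ
  one_lt_g : 1 < g
  branch : Fin g → Set ℝ
  branch_Ico : ∀ i, ∃ a b : ℝ, a < b ∧ branch i = Ico a b
  branch_cover : (⋃ i, branch i) = Ico (0:ℝ) 1
  branch_disjoint : ∀ i j, i ≠ j → Disjoint (branch i) (branch j)
  f : ℝ → ℝ
  f_onto : ∀ i, f '' branch i = Ico (0:ℝ) 1
  f_mono : ∀ i, StrictMonoOn f (branch i) ∨ StrictAntiOn f (branch i)
  f_expanding : ∀ i, ∀ x ∈ branch i, ∀ y ∈ branch i, |x - y| ≤ |f x - f y|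

namespace ExpandingFullShift

variable (E : ExpandingFullShift)

/-- The symbol `0`. -/
def zeroSym : Fin E.g := ⟨0, Nat.lt_trans Nat.one_pos E.one_lt_g⟩

/-- The cylinder `C_{x₁ … x_n} ⊆ [0,1)` determined by a word `w`. -/
def cylinder (w : List (Fin E.g)) : Set ℝ :=
  {x ∈ Ico (0:ℝ) 1 | ∀ k (hk : k < w.length), E.f^[k] x ∈ E.branch (w.get ⟨k, hk⟩)}

/-- A cylinder in some interval `[k, k+1)`, `k ∈ ℤ` (periodic extension of the
cylinder structure to `ℝ`). -/
def IsCylinderZ (C : Set ℝ) : Prop :=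
  ∃ (w : List (Fin E.g)) (k : ℤ), C = (fun x => x + (k : ℝ)) '' E.cylinder w

/-- The outer measure `N^s_∞` obtained from countable covers by cylinders of `E`. -/
def cylMeasure (s : ℝ) (A : Set ℝ) : ℝ≥0∞ :=
  ⨅ (c : ℕ → List (Fin E.g)) (_ : A ⊆ ⋃ i, E.cylinder (c i)),
    ∑' i, volume (E.cylinder (c i)) ^ s

/-- The outer measure `N^s_∞` from covers by cylinders of the periodic extension. -/
def cylMeasureZ (s : ℝ) (A : Set ℝ) : ℝ≥0∞ :=
  ⨅ (c : ℕ → Set ℝ) (_ : ∀ i, E.IsCylinderZ (c i)) (_ : A ⊆ ⋃ i, c i),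
    ∑' i, volume (c i) ^ s

/-- The empirical frequency `τ^f_w(x,n)/(n-m)` of the word `w` (of length `m`)
in the first `n` symbols of the expansion of `x`. -/
def freq {m : ℕ} (w : Fin m → Fin E.g) (x : ℝ) (n : ℕ) : ℝ :=
  (((Finset.range (n - m)).filter
      (fun i => ∀ k : Fin m, E.f^[i + k] x ∈ E.branch (w k))).card : ℝ) / ((n - m : ℕ) : ℝ)

/-- `G^{f,m}_{p̄}`: the set of points whose length-`m` word frequencies converge to `p̄`. -/
def Gset (m : ℕ) (p : (Fin m → Fin E.g) → ℝ) : Set ℝ :=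
  {x ∈ Ico (0:ℝ) 1 | ∀ w : Fin m → Fin E.g,
    Tendsto (fun n => E.freq w x n) atTop (nhds (p w))}

/-- `G^{f,m}_{p̄}(n,ε)`: points whose empirical length-`m` word frequencies at time `n`
are within `ε` of `p̄` componentwise. -/
def GsetApprox (m : ℕ) (p : (Fin m → Fin E.g) → ℝ) (n : ℕ) (ε : ℝ) : Set ℝ :=
  {x ∈ Ico (0:ℝ) 1 | ∀ w : Fin m → Fin E.g, |E.freq w x n - p w| < ε}

/-- `p̄ ∈ A^{f,m}(x)`: the vector `p̄` is an accumulation point of the empirical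
frequency vectors of `x` as `n → ∞`. -/
def IsFreqAccum (m : ℕ) (p : (Fin m → Fin E.g) → ℝ) (x : ℝ) : Prop :=
  MapClusterPt p atTop (fun n => fun w => E.freq w x n)

/-- `x` is `m`-normal to `f`: every length-`m` word occurs with frequency equal to
the length of the corresponding cylinder. -/
def IsNormal (m : ℕ) (x : ℝ) : Prop :=
  ∀ w : Fin m → Fin E.g,
    Tendsto (fun n => E.freq w x n) atTop (nhds (volume (E.cylinder (List.ofFn w))).toReal)

/-- Bounded distortion with constant `K`:
`|C_u||C_v|/K ≤ |C_{uv}| ≤ K |C_u||C_v|` for all words `u, v`. -/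
def HasBoundedDistortion (K : ℝ) : Prop :=
  ∀ u v : List (Fin E.g),
    volume (E.cylinder (u ++ v)) ≤
      ENNReal.ofReal K * (volume (E.cylinder u) * volume (E.cylinder v)) ∧
    volume (E.cylinder u) * volume (E.cylinder v) ≤
      ENNReal.ofReal K * volume (E.cylinder (u ++ v))

/-- Condition (ii): for each `m` there is `p̄` with `dim_H G^{f,m}_{p̄} = 1`, and for
each word `w` of length `m` there are vectors `q̄` with `q_w ≠ p_w` whose `G`-set has
Hausdorff dimension arbitrarily close to `1`. -/
def CondII : Prop :=
  ∀ m : ℕ, 0 < m → ∃ p : (Fin m → Fin E.g) → ℝ, IsProbVector p ∧ dimH (E.Gset m p) = 1 ∧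
    ∀ w : Fin m → Fin E.g, ∀ t : ℝ≥0∞, t < 1 → ∃ q : (Fin m → Fin E.g) → ℝ,
      IsProbVector q ∧ q w ≠ p w ∧ t ≤ dimH (E.Gset m q)

end ExpandingFullShift
namespace ExpandingFullShift

variable (E : ExpandingFullShift)

lemma branch_subset (i : Fin E.g) : E.branch i ⊆ Ico (0:ℝ) 1 := by
  rw [← E.branch_cover]; exact subset_iUnion _ i

lemma mem_branch_exists {x : ℝ} (hx : x ∈ Ico (0:ℝ) 1) : ∃ i, x ∈ E.branch i := by
  rw [← E.branch_cover] at hx; exact mem_iUnion.1 hx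

lemma f_mem_Ico {x : ℝ} (hx : x ∈ Ico (0:ℝ) 1) : E.f x ∈ Ico (0:ℝ) 1 := by
  obtain ⟨i, hi⟩ := E.mem_branch_exists hx
  rw [← E.f_onto i]; exact mem_image_of_mem _ hi

lemma iterate_mem_Ico {x : ℝ} (hx : x ∈ Ico (0:ℝ) 1) (k : ℕ) :
    E.f^[k] x ∈ Ico (0:ℝ) 1 := by
  induction k with
  | zero => simpa using hx
  | succ k ih => rw [Function.iterate_succ_apply']; exact E.f_mem_Ico ih

lemma cylinder_subset_Ico (w : List (Fin E.g)) : E.cylinder w ⊆ Ico (0:ℝ) 1 :=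
  fun _ hx => hx.1

lemma cylinder_nil : E.cylinder [] = Ico (0:ℝ) 1 := by
  ext x; simp [cylinder]

lemma mem_cylinder_append {x : ℝ} {u v : List (Fin E.g)} :
    x ∈ E.cylinder (u ++ v) ↔ x ∈ E.cylinder u ∧ E.f^[u.length] x ∈ E.cylinder v := by
  constructor
  · rintro ⟨hx01, h⟩
    refine ⟨⟨hx01, fun k hk => ?_⟩, ⟨E.iterate_mem_Ico hx01 _, fun k hk => ?_⟩⟩
    · have hk' : k < (u ++ v).length := by simp; omega
      have := h k hk'
      simp only [List.get_eq_getElem, List.getElem_append_left hk] at this ⊢; exact this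
    · have hk' : u.length + k < (u ++ v).length := by simp; omega
      have := h (u.length + k) hk'
      rw [← Function.iterate_add_apply]
      have hget : (u ++ v).get ⟨u.length + k, hk'⟩ = v.get ⟨k, hk⟩ := by
        simp only [List.get_eq_getElem]; rw [List.getElem_append_right (by omega)]; simp
      rw [hget] at this
      rwa [Nat.add_comm k u.length]
  · rintro ⟨⟨hx01, hu⟩, _, hv⟩
    refine ⟨hx01, fun k hk => ?_⟩
    rcases lt_or_ge k u.length with h | h
    · have := hu k h
      simp only [List.get_eq_getElem, List.getElem_append_left h] at this ⊢; exact this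
    · have hk2 : k - u.length < v.length := by simp at hk; omega
      have := hv _ hk2
      rw [← Function.iterate_add_apply] at this
      have hget : (u ++ v).get ⟨k, hk⟩ = v.get ⟨k - u.length, hk2⟩ := by
        simp only [List.get_eq_getElem]; rw [List.getElem_append_right (by omega)]
      rw [hget]
      have : E.f^[k - u.length + u.length] x ∈ E.branch (v.get ⟨k - u.length, hk2⟩) := this
      rwa [Nat.sub_add_cancel h] at this

end ExpandingFullShift
namespace ExpandingFullShift

variable (E : ExpandingFullShift)

lemma exists_preimage (w : List (Fin E.g)) {y : ℝ} (hy : y ∈ Ico (0:ℝ) 1) :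
    ∃ x, x ∈ E.cylinder w ∧ E.f^[w.length] x = y := by
  induction w with
  | nil => exact ⟨y, by rwa [E.cylinder_nil], rfl⟩
  | cons a t ih =>
    obtain ⟨x', hx', hfx'⟩ := ih
    have hx'01 : x' ∈ Ico (0:ℝ) 1 := hx'.1
    have : x' ∈ E.f '' E.branch a := by rw [E.f_onto a]; exact hx'01
    obtain ⟨x, hxa, hfx⟩ := this
    have hx01 : x ∈ Ico (0:ℝ) 1 := E.branch_subset a hxa
    refine ⟨x, ⟨hx01, fun k hk => ?_⟩, ?_⟩
    · match k with
      | 0 => simpa using hxa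
      | Nat.succ k =>
        have hk' : k < t.length := by simpa using hk
        have := hx'.2 k hk'
        rw [Function.iterate_succ_apply, hfx]
        exact this
    · rw [List.length_cons, Function.iterate_succ_apply, hfx, hfx']

/-- Two cylinders containing a common point are nested. -/
lemma get_eq_of_mem_cylinder {x : ℝ} {u w : List (Fin E.g)} (hu : x ∈ E.cylinder u)
    (hw : x ∈ E.cylinder w) (k : ℕ) (hku : k < u.length) (hkw : k < w.length) :
    u.get ⟨k, hku⟩ = w.get ⟨k, hkw⟩ := by
  by_contra hne
  exact (E.branch_disjoint _ _ hne).ne_of_mem (hu.2 k hku) (hw.2 k hkw) rfl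

lemma cylinder_subset_of_mem {x : ℝ} {u w : List (Fin E.g)} (hu : x ∈ E.cylinder u)
    (hw : x ∈ E.cylinder w) (hlen : u.length ≤ w.length) :
    E.cylinder w ⊆ E.cylinder u := by
  rintro y ⟨hy01, hy⟩
  refine ⟨hy01, fun k hk => ?_⟩
  rw [E.get_eq_of_mem_cylinder hu hw k hk (lt_of_lt_of_le hk hlen)]
  exact hy k _

lemma prefix_of_mem_cylinder {x : ℝ} {u w : List (Fin E.g)} (hu : x ∈ E.cylinder u)
    (hw : x ∈ E.cylinder w) (hlen : w.length ≤ u.length) : w <+: u := by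
  refine List.prefix_iff_eq_take.2 (List.ext_get (by simp; omega) ?_).symm
  intro k h1 h2
  have h3 : k < u.length := by simp at h1; omega
  have := E.get_eq_of_mem_cylinder hu hw k h3 h2
  simp only [List.get_eq_getElem, List.getElem_take] at *
  exact this


end ExpandingFullShift
namespace ExpandingFullShift

variable (E : ExpandingFullShift)

lemma branch_ordConnected (i : Fin E.g) : OrdConnected (E.branch i) := by
  obtain ⟨a, b, _, h⟩ := E.branch_Ico i
  rw [h]; exact ordConnected_Ico

/-- `f` maps points between two branch points to points between their images. -/
lemma f_uIcc {i : Fin E.g} {x y z : ℝ} (hx : x ∈ E.branch i) (hy : y ∈ E.branch i)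
    (hz : z ∈ E.branch i) (hmem : z ∈ uIcc x y) : E.f z ∈ uIcc (E.f x) (E.f y) := by
  rcases E.f_mono i with h | h
  · rcases le_total x y with hxy | hxy
    · rw [uIcc_of_le hxy] at hmem
      rw [uIcc_of_le (h.monotoneOn hx hy hxy)]
      exact ⟨h.monotoneOn hx hz hmem.1, h.monotoneOn hz hy hmem.2⟩
    · rw [uIcc_of_ge hxy] at hmem
      rw [uIcc_of_ge (h.monotoneOn hy hx hxy)]
      exact ⟨h.monotoneOn hy hz hmem.1, h.monotoneOn hz hx hmem.2⟩
  · rcases le_total x y with hxy | hxy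
    · rw [uIcc_of_le hxy] at hmem
      rw [uIcc_of_ge (h.antitoneOn hx hy hxy)]
      exact ⟨h.antitoneOn hz hy hmem.2, h.antitoneOn hx hz hmem.1⟩
    · rw [uIcc_of_ge hxy] at hmem
      rw [uIcc_of_le (h.antitoneOn hy hx hxy)]
      exact ⟨h.antitoneOn hz hx hmem.2, h.antitoneOn hy hz hmem.1⟩

lemma cylinder_ordConnected (w : List (Fin E.g)) : OrdConnected (E.cylinder w) := by
  rw [ordConnected_iff_uIcc_subset]
  intro x hx y hy z hz
  have key : ∀ k ≤ w.length, E.f^[k] z ∈ uIcc (E.f^[k] x) (E.f^[k] y) := by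
    intro k hk
    induction k with
    | zero => simpa using hz
    | succ k ih =>
      have hk' : k < w.length := hk
      have hzk := ih (le_of_lt hk')
      have hxk := hx.2 k hk'
      have hyk := hy.2 k hk'
      have hzmem : E.f^[k] z ∈ E.branch (w.get ⟨k, hk'⟩) :=
        (E.branch_ordConnected _).uIcc_subset hxk hyk hzk
      rw [Function.iterate_succ_apply', Function.iterate_succ_apply',
        Function.iterate_succ_apply']
      exact E.f_uIcc hxk hyk hzmem hzk
  have hz01 : z ∈ Ico (0:ℝ) 1 := ordConnected_Ico.uIcc_subset hx.1 hy.1 hz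
  refine ⟨hz01, fun k hk => ?_⟩
  exact (E.branch_ordConnected _).uIcc_subset (hx.2 k hk) (hy.2 k hk) (key k (le_of_lt hk))

/-- For a bounded order-connected subset of `ℝ`, volume equals diameter. -/
lemma volume_eq_ediam_aux {A : Set ℝ} (hA : OrdConnected A) (hb : A ⊆ Ico (0:ℝ) 1) :
    volume A = EMetric.diam A := by
  rcases A.eq_empty_or_nonempty with rfl | hne
  · simp [EMetric.diam]
  have hbdd : BddAbove A := ⟨1, fun x hx => (hb hx).2.le⟩
  have hbdd' : BddBelow A := ⟨0, fun x hx => (hb hx).1⟩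
  set a := sInf A
  set b := sSup A
  have hab : a ≤ b := Real.sInf_le_sSup A hbdd' hbdd
  have hsub : A ⊆ Icc a b := fun x hx => ⟨csInf_le hbdd' hx, le_csSup hbdd hx⟩
  have hsup : Ioo a b ⊆ A := by
    intro z hz
    obtain ⟨x, hxA, hxz⟩ := (csInf_lt_iff hbdd' hne).1 hz.1
    obtain ⟨y, hyA, hzy⟩ := (lt_csSup_iff hbdd hne).1 hz.2
    exact hA.out hxA hyA ⟨hxz.le, hzy.le⟩
  have h1 : volume A = ENNReal.ofReal (b - a) := by
    refine le_antisymm ?_ ?_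
    · calc volume A ≤ volume (Icc a b) := measure_mono hsub
        _ = ENNReal.ofReal (b - a) := by rw [Real.volume_Icc]
    · calc ENNReal.ofReal (b - a) = volume (Ioo a b) := (Real.volume_Ioo).symm
        _ ≤ volume A := measure_mono hsup
  have h2 : EMetric.diam A = ENNReal.ofReal (b - a) := by
    refine le_antisymm ?_ ?_
    · calc EMetric.diam A ≤ EMetric.diam (Icc a b) := EMetric.diam_mono hsub
        _ = ENNReal.ofReal (b - a) := by rw [EMetric.diam, Real.ediam_Icc]
    · calc ENNReal.ofReal (b - a) = EMetric.diam (Ioo a b) := (Real.ediam_Ioo a b).symm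
        _ ≤ EMetric.diam A := EMetric.diam_mono hsup
  rw [h1, h2]

lemma volume_cylinder_eq_ediam (w : List (Fin E.g)) :
    volume (E.cylinder w) = EMetric.diam (E.cylinder w) :=
  volume_eq_ediam_aux (E.cylinder_ordConnected w) (E.cylinder_subset_Ico w)

lemma volume_cylinder_le_one (w : List (Fin E.g)) : volume (E.cylinder w) ≤ 1 := by
  calc volume (E.cylinder w) ≤ volume (Ico (0:ℝ) 1) := measure_mono (E.cylinder_subset_Ico w)
    _ = 1 := by simp

end ExpandingFullShift
namespace ExpandingFullShift

variable (E : ExpandingFullShift)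

/-- The number of occurrences of the word `w` in the first symbols of `x`. -/
def cnt {m : ℕ} (w : Fin m → Fin E.g) (x : ℝ) (n : ℕ) : ℕ :=
  ((Finset.range (n - m)).filter
      (fun i => ∀ k : Fin m, E.f^[i + k] x ∈ E.branch (w k))).card

lemma freq_eq_cnt {m : ℕ} (w : Fin m → Fin E.g) (x : ℝ) (n : ℕ) :
    E.freq w x n = (E.cnt w x n : ℝ) / ((n - m : ℕ) : ℝ) := rfl

lemma cnt_le {m : ℕ} (w : Fin m → Fin E.g) (x : ℝ) (n : ℕ) : E.cnt w x n ≤ n - m := by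
  calc E.cnt w x n ≤ (Finset.range (n - m)).card := Finset.card_filter_le _ _
    _ = n - m := Finset.card_range _

lemma cond_shift {m : ℕ} (w : Fin m → Fin E.g) (x : ℝ) (L i : ℕ) :
    (∀ k : Fin m, E.f^[(i + L) + k] x ∈ E.branch (w k)) ↔
    (∀ k : Fin m, E.f^[i + k] (E.f^[L] x) ∈ E.branch (w k)) := by
  constructor <;> intro h k <;> have := h k
  · rwa [← Function.iterate_add_apply, show i + k + L = (i + L) + k by omega]
  · rw [show (i + L) + (k:ℕ) = (i + k) + L by omega, Function.iterate_add_apply]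
    exact this

lemma cnt_shift_le {m : ℕ} (w : Fin m → Fin E.g) (x : ℝ) (L n : ℕ) (hmn : m ≤ n) :
    E.cnt w (E.f^[L] x) n ≤ E.cnt w x (n + L) := by
  apply Finset.card_le_card_of_injOn (fun i => i + L)
  · intro i hi
    simp only [Finset.mem_coe, Finset.mem_filter, Finset.mem_range] at hi
    have h1 : i + L < n + L - m := by omega
    have h2 := (E.cond_shift w x L i).2 hi.2
    simp only [Finset.mem_coe, Finset.mem_filter, Finset.mem_range]
    exact ⟨h1, h2⟩
  · intro a _ b _ h
    simpa using h

lemma cnt_shift_ge {m : ℕ} (w : Fin m → Fin E.g) (x : ℝ) (L n : ℕ) (hmn : m ≤ n) :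
    E.cnt w x (n + L) ≤ L + E.cnt w (E.f^[L] x) n := by
  have hsub : (Finset.range (n + L - m)).filter
      (fun i => ∀ k : Fin m, E.f^[i + k] x ∈ E.branch (w k)) ⊆
      Finset.range L ∪ ((Finset.range (n - m)).filter
        (fun i => ∀ k : Fin m, E.f^[i + k] (E.f^[L] x) ∈ E.branch (w k))).image
        (fun i => i + L) := by
    intro i hi
    simp only [Finset.mem_filter, Finset.mem_range, Finset.mem_union, Finset.mem_image] at hi ⊢
    rcases lt_or_ge i L with h | h
    · exact Or.inl h
    · refine Or.inr ⟨i - L, ⟨by omega, ?_⟩, by omega⟩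
      apply (E.cond_shift w x L (i - L)).1
      have : i - L + L = i := by omega
      rw [this]; exact hi.2
  calc E.cnt w x (n + L) ≤ _ := Finset.card_le_card hsub
    _ ≤ L + E.cnt w (E.f^[L] x) n := by
      refine le_trans (Finset.card_union_le _ _) ?_
      gcongr
      · simp
      · exact Finset.card_image_le

/-- The key frequency-shift estimate. -/
lemma freq_shift {m : ℕ} (w : Fin m → Fin E.g) (x : ℝ) (L n : ℕ) (hmn : m < n) :
    |E.freq w x (n + L) - E.freq w (E.f^[L] x) n| ≤ 2 * L / ((n : ℝ) - m) := by
  have h1 := E.cnt_shift_le w x L n hmn.le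
  have h2 := E.cnt_shift_ge w x L n hmn.le
  have h3 := E.cnt_le w (E.f^[L] x) n
  set cy := E.cnt w (E.f^[L] x) n with hcy
  set cx := E.cnt w x (n + L) with hcx
  rw [E.freq_eq_cnt, E.freq_eq_cnt]
  have hny : (n - m : ℕ) = n - m := rfl
  have hDyv : ((n - m : ℕ) : ℝ) = (n : ℝ) - m := by
    push_cast [Nat.cast_sub hmn.le]; ring
  have hDxv : ((n + L - m : ℕ) : ℝ) = ((n : ℝ) - m) + L := by
    have : n + L - m = (n - m) + L := by omega
    rw [this]; push_cast [Nat.cast_sub hmn.le]; ring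
  rw [hDyv, hDxv]
  set Dy := (n : ℝ) - m with hDy
  have hDy0 : 0 < Dy := by
    rw [hDy]; rw [sub_pos]; exact_mod_cast hmn
  rw [← hcx, ← hcy]
  have hB1 : (cy : ℝ) ≤ (cx : ℝ) := by exact_mod_cast h1
  have hA2 : (cx : ℝ) ≤ L + cy := by exact_mod_cast h2
  have hB3 : (cy : ℝ) ≤ Dy := by
    rw [← hDyv]; exact_mod_cast h3
  have hB0 : (0:ℝ) ≤ cy := Nat.cast_nonneg _
  have hL0 : (0:ℝ) ≤ L := Nat.cast_nonneg _
  have hDx0 : (0:ℝ) < Dy + L := by positivity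
  have e1 : (cx:ℝ)/(Dy+L) - (cy:ℝ)/Dy = ((cx:ℝ)*Dy - (cy:ℝ)*(Dy+L))/((Dy+L)*Dy) := by
    field_simp
  rw [e1, abs_div, abs_of_pos (mul_pos hDx0 hDy0), div_le_div_iff₀ (mul_pos hDx0 hDy0) hDy0]
  have habs : |(cx:ℝ)*Dy - (cy:ℝ)*(Dy+L)| ≤ L*Dy :=
    abs_le.2 ⟨by nlinarith, by nlinarith⟩
  nlinarith [habs, mul_pos hDy0 hDy0, mul_nonneg (mul_nonneg hL0 hDy0.le) hDy0.le,
    mul_nonneg (mul_nonneg hL0 hL0) hDy0.le]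

end ExpandingFullShift
namespace ExpandingFullShift

variable (E : ExpandingFullShift)

lemma ceil_bound {ε : ℝ} (hε : 0 < ε) (L mv n : ℕ)
    (h : mv + 1 + Nat.ceil (8 * L / ε) ≤ n) :
    mv < n ∧ 2 * L / ((n : ℝ) - mv) < ε / 4 := by
  have hmn : mv < n := by omega
  have hc : (8 * L / ε : ℝ) ≤ (Nat.ceil (8 * L / ε : ℝ) : ℝ) := Nat.le_ceil _
  have hcast : ((mv : ℝ) + 1 + (Nat.ceil (8 * L / ε : ℝ) : ℝ)) ≤ (n : ℝ) := by
    exact_mod_cast Nat.cast_le.2 h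
  have hD : (1 : ℝ) + 8 * L / ε ≤ (n : ℝ) - mv := by linarith
  have hD0 : (0 : ℝ) < (n : ℝ) - mv := by
    have hL0 : (0:ℝ) ≤ 8 * L / ε := by positivity
    linarith
  refine ⟨hmn, ?_⟩
  rw [div_lt_iff₀ hD0]
  have hQ : ε * (8 * L / ε) = 8 * L := by field_simp
  nlinarith [mul_nonneg (le_of_lt hε) (sub_nonneg.2 hD), hε]

lemma shift_mem_GsetApprox {m : ℕ} {p : (Fin m → Fin E.g) → ℝ} {ε : ℝ} {x : ℝ} {L n : ℕ}
    (hx01 : x ∈ Ico (0:ℝ) 1)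
    (hx : ∀ w' : Fin m → Fin E.g, |E.freq w' x (n + L) - p w'| < ε / 4)
    (hmn : m < n) (hb : 2 * L / ((n : ℝ) - m) < ε / 4) :
    E.f^[L] x ∈ E.GsetApprox m p n (ε / 2) := by
  refine ⟨E.iterate_mem_Ico hx01 L, fun w' => ?_⟩
  have h1 := E.freq_shift w' x L n hmn
  have h2 := hx w'
  calc |E.freq w' (E.f^[L] x) n - p w'|
      ≤ |E.freq w' (E.f^[L] x) n - E.freq w' x (n + L)| + |E.freq w' x (n + L) - p w'| :=
        abs_sub_le _ _ _
    _ < 2 * L / ((n : ℝ) - m) + ε / 4 := by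
        rw [abs_sub_comm]; exact add_lt_add_of_le_of_lt h1 h2
    _ < ε / 2 := by linarith

lemma preimage_mem_GsetApprox {m : ℕ} {p : (Fin m → Fin E.g) → ℝ} {ε : ℝ} {x : ℝ} {L n : ℕ}
    (hy : E.f^[L] x ∈ E.GsetApprox m p n (ε / 2))
    (hmn : m < n) (hb : 2 * L / ((n : ℝ) - m) < ε / 4) (hε : 0 < ε) :
    ∀ w' : Fin m → Fin E.g, |E.freq w' x (n + L) - p w'| < ε := by
  intro w'
  have h1 := E.freq_shift w' x L n hmn
  have h2 := hy.2 w'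
  calc |E.freq w' x (n + L) - p w'|
      ≤ |E.freq w' x (n + L) - E.freq w' (E.f^[L] x) n| + |E.freq w' (E.f^[L] x) n - p w'| :=
        abs_sub_le _ _ _
    _ < 2 * L / ((n : ℝ) - m) + ε / 2 := add_lt_add_of_le_of_lt h1 h2
    _ < ε := by linarith

end ExpandingFullShift
open scoped Topology NNReal

namespace ExpandingFullShift

variable (E : ExpandingFullShift)

lemma core {K : ℝ} (hK : 1 ≤ K) (hbd : E.HasBoundedDistortion K)
    {m : ℕ} {p : (Fin m → Fin E.g) → ℝ} {ε : ℝ} (hε : 0 < ε)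
    {s : ℝ} (hs0 : 0 < s) (hs : ENNReal.ofReal s < dimH (E.Gset m p))
    {S : ℝ≥0∞} (hρ : (ENNReal.ofReal K) ^ s * S < 1)
    (Hyp : ∀ N : ℕ, ∃ (n : ℕ) (D : ℕ → List (Fin E.g)), N ≤ n ∧
      (E.GsetApprox m p n (ε / 2) ⊆ ⋃ i, E.cylinder (D i)) ∧
      ∑' i, volume (E.cylinder (D i)) ^ s ≤ S) : False := by
  classical
  set K' := ENNReal.ofReal K with hK'
  have hK'1 : 1 ≤ K' := ENNReal.one_le_ofReal.2 hK
  have hK's : 1 ≤ K' ^ s := by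
    calc (1:ℝ≥0∞) = 1 ^ s := (ENNReal.one_rpow s).symm
      _ ≤ K' ^ s := ENNReal.rpow_le_rpow hK'1 hs0.le
  set ρ := K' ^ s * S with hρdef
  have hS_le : S ≤ ρ := by
    calc S = 1 * S := (one_mul S).symm
      _ ≤ K' ^ s * S := mul_le_mul_left hK's S
  have hS1 : S < 1 := lt_of_le_of_lt hS_le hρ
  have hSfin : S ≠ ∞ := (lt_of_lt_of_le hS1 le_top).ne
  -- choose covers
  choose nn D hnn hcov hsum using Hyp
  -- the sets H N
  set H : ℕ → Set ℝ := fun N => {x | ∀ n, N ≤ n → x ∈ E.GsetApprox m p n (ε / 4)} with hH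
  -- each H N has Hausdorff measure zero
  have hHmeas : ∀ N : ℕ, μH[s] (H N) = 0 := by
    intro N
    set idx : List (Fin E.g) → ℕ := fun c => N + m + 1 + Nat.ceil (8 * c.length / ε) with hidx
    set covF : (ℕ → List (Fin E.g)) → (ℕ → List (Fin E.g)) :=
      fun c i => c i.unpair.1 ++ D (idx (c i.unpair.1)) i.unpair.2 with hcovF
    set cov : ℕ → ℕ → List (Fin E.g) := fun k => covF^[k] (D (idx [])) with hcov'
    have cov_zero : cov 0 = D (idx []) := rfl
    have cov_succ : ∀ k, cov (k + 1) =
        fun i => cov k i.unpair.1 ++ D (idx (cov k i.unpair.1)) i.unpair.2 := by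
      intro k
      simp only [hcov', Function.iterate_succ_apply']
      rfl
    -- the key step
    have hstep : ∀ (c : List (Fin E.g)) (x : ℝ), x ∈ H N → x ∈ E.cylinder c →
        ∃ j, E.f^[c.length] x ∈ E.cylinder (D (idx c) j) := by
      intro c x hxH hxc
      set n₂ := nn (idx c) with hn₂def
      have hn₂ : idx c ≤ n₂ := hnn _
      have hcb := ceil_bound hε c.length m n₂ (by simp only [hidx] at hn₂ ⊢; omega)
      have hNidx : N ≤ idx c := by simp only [hidx]; omega
      have hxG : x ∈ E.GsetApprox m p (n₂ + c.length) (ε / 4) := hxH _ (by omega)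
      have hy : E.f^[c.length] x ∈ E.GsetApprox m p n₂ (ε / 2) :=
        E.shift_mem_GsetApprox hxc.1 (fun w' => hxG.2 w') hcb.1 hcb.2
      have := hcov (idx c) hy
      rw [mem_iUnion] at this
      exact this
    -- covering invariant
    have hcover : ∀ k, H N ⊆ ⋃ i, E.cylinder (cov k i) := by
      intro k
      induction k with
      | zero =>
        intro x hx
        have hx01 : x ∈ Ico (0:ℝ) 1 := (hx N le_rfl).1
        have hxnil : x ∈ E.cylinder [] := by rw [E.cylinder_nil]; exact hx01
        obtain ⟨j, hj⟩ := hstep [] x hx hxnil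
        rw [mem_iUnion]
        exact ⟨j, by simpa [cov_zero] using hj⟩
      | succ k ih =>
        intro x hx
        obtain ⟨i, hi⟩ := mem_iUnion.1 (ih hx)
        obtain ⟨j, hj⟩ := hstep (cov k i) x hx hi
        rw [mem_iUnion]
        refine ⟨Nat.pair i j, ?_⟩
        rw [cov_succ k]
        simp only [Nat.unpair_pair]
        exact (E.mem_cylinder_append).2 ⟨hi, hj⟩
    -- sum invariant
    have hsum_k : ∀ k, ∑' i, volume (E.cylinder (cov k i)) ^ s ≤ S * ρ ^ k := by
      intro k
      induction k with
      | zero => simpa [cov_zero] using hsum (idx [])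
      | succ k ih =>
        rw [cov_succ k]
        have reindex : ∑' (i : ℕ),
            volume (E.cylinder (cov k i.unpair.1 ++ D (idx (cov k i.unpair.1)) i.unpair.2)) ^ s
            = ∑' (a : ℕ) (b : ℕ),
              volume (E.cylinder (cov k a ++ D (idx (cov k a)) b)) ^ s := by
          calc ∑' (i : ℕ),
              volume (E.cylinder (cov k i.unpair.1 ++ D (idx (cov k i.unpair.1)) i.unpair.2)) ^ s
              = ∑' (q : ℕ × ℕ),
                volume (E.cylinder (cov k q.1 ++ D (idx (cov k q.1)) q.2)) ^ s := by
                rw [← Equiv.tsum_eq Nat.pairEquiv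
                  (fun i => volume (E.cylinder (cov k i.unpair.1 ++
                    D (idx (cov k i.unpair.1)) i.unpair.2)) ^ s)]
                apply tsum_congr
                intro q
                have hq : (Nat.pairEquiv q).unpair = q := by
                  exact Nat.pairEquiv.symm_apply_apply q
                rw [hq]
            _ = ∑' (a : ℕ) (b : ℕ),
                volume (E.cylinder (cov k a ++ D (idx (cov k a)) b)) ^ s :=
                ENNReal.tsum_prod'
        rw [reindex]
        have hterm : ∀ a b, volume (E.cylinder (cov k a ++ D (idx (cov k a)) b)) ^ s ≤
            K' ^ s * (volume (E.cylinder (cov k a)) ^ s *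
              volume (E.cylinder (D (idx (cov k a)) b)) ^ s) := by
          intro a b
          have h1 := (hbd (cov k a) (D (idx (cov k a)) b)).1
          calc volume (E.cylinder (cov k a ++ D (idx (cov k a)) b)) ^ s
              ≤ (K' * (volume (E.cylinder (cov k a)) *
                  volume (E.cylinder (D (idx (cov k a)) b)))) ^ s :=
                ENNReal.rpow_le_rpow h1 hs0.le
            _ = K' ^ s * (volume (E.cylinder (cov k a)) ^ s *
                  volume (E.cylinder (D (idx (cov k a)) b)) ^ s) := by
                rw [ENNReal.mul_rpow_of_nonneg _ _ hs0.le,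
                  ENNReal.mul_rpow_of_nonneg _ _ hs0.le]
        calc ∑' (a : ℕ) (b : ℕ), volume (E.cylinder (cov k a ++ D (idx (cov k a)) b)) ^ s
            ≤ ∑' (a : ℕ), K' ^ s * (volume (E.cylinder (cov k a)) ^ s * S) := by
              refine ENNReal.tsum_le_tsum fun a => ?_
              calc ∑' (b : ℕ), volume (E.cylinder (cov k a ++ D (idx (cov k a)) b)) ^ s
                  ≤ ∑' (b : ℕ), K' ^ s * (volume (E.cylinder (cov k a)) ^ s *
                      volume (E.cylinder (D (idx (cov k a)) b)) ^ s) :=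
                    ENNReal.tsum_le_tsum fun b => hterm a b
                _ = K' ^ s * (volume (E.cylinder (cov k a)) ^ s *
                      ∑' (b : ℕ), volume (E.cylinder (D (idx (cov k a)) b)) ^ s) := by
                    rw [ENNReal.tsum_mul_left, ENNReal.tsum_mul_left]
                _ ≤ K' ^ s * (volume (E.cylinder (cov k a)) ^ s * S) := by
                    gcongr
                    exact hsum _
          _ = K' ^ s * S * ∑' (a : ℕ), volume (E.cylinder (cov k a)) ^ s := by
              rw [ENNReal.tsum_mul_left, ENNReal.tsum_mul_right]
              ring
          _ ≤ K' ^ s * S * (S * ρ ^ k) := by gcongr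
          _ = S * ρ ^ (k + 1) := by rw [hρdef]; ring
    -- diameters
    have hdiam : ∀ k i, EMetric.diam (E.cylinder (cov k i)) ≤ (S * ρ ^ k) ^ (1 / s) := by
      intro k i
      rw [← E.volume_cylinder_eq_ediam]
      have h1 : volume (E.cylinder (cov k i)) ^ s ≤ S * ρ ^ k :=
        le_trans (ENNReal.le_tsum i) (hsum_k k)
      have h2 : (volume (E.cylinder (cov k i)) ^ s) ^ (1 / s) ≤ (S * ρ ^ k) ^ (1 / s) :=
        ENNReal.rpow_le_rpow h1 (by positivity)
      rwa [← ENNReal.rpow_mul, mul_one_div, div_self hs0.ne', ENNReal.rpow_one] at h2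
    -- mesh tends to zero
    have hρ0 : Tendsto (fun k : ℕ => S * ρ ^ k) atTop (𝓝 0) := by
      have h1 : Tendsto (fun k : ℕ => ρ ^ k) atTop (𝓝 0) :=
        ENNReal.tendsto_pow_atTop_nhds_zero_of_lt_one hρ
      have := ENNReal.Tendsto.const_mul h1 (Or.inr hSfin)
      simpa using this
    have hr0 : Tendsto (fun k : ℕ => (S * ρ ^ k) ^ (1 / s)) atTop (𝓝 0) := by
      have hcont := (ENNReal.continuous_rpow_const (y := 1 / s)).tendsto 0
      have := hcont.comp hρ0
      have h0 : (0 : ℝ≥0∞) ^ (1 / s) = 0 := by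
        rw [ENNReal.zero_rpow_of_pos (by positivity)]
      rw [h0] at this
      exact this
    -- apply the Hausdorff bound
    have hmain : μH[s] (H N) ≤ liminf (fun k : ℕ =>
        ∑' i, EMetric.diam (E.cylinder (cov k i)) ^ s) atTop :=
      MeasureTheory.Measure.hausdorffMeasure_le_liminf_tsum s (H N)
        (fun k => (S * ρ ^ k) ^ (1 / s)) hr0
        (fun k i => E.cylinder (cov k i))
        (Filter.Eventually.of_forall fun k i => hdiam k i)
        (Filter.Eventually.of_forall hcover)
    have hzero : liminf (fun k : ℕ =>
        ∑' i, EMetric.diam (E.cylinder (cov k i)) ^ s) atTop ≤ 0 := by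
      have hle : ∀ k, (∑' i, EMetric.diam (E.cylinder (cov k i)) ^ s) ≤ S * ρ ^ k := by
        intro k
        have : ∑' i, EMetric.diam (E.cylinder (cov k i)) ^ s
            = ∑' i, volume (E.cylinder (cov k i)) ^ s := by
          apply tsum_congr
          intro i
          rw [E.volume_cylinder_eq_ediam]
        rw [this]; exact hsum_k k
      calc liminf (fun k : ℕ => ∑' i, EMetric.diam (E.cylinder (cov k i)) ^ s) atTop
          ≤ liminf (fun k : ℕ => S * ρ ^ k) atTop :=
            Filter.liminf_le_liminf (Filter.Eventually.of_forall hle)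
        _ = 0 := hρ0.liminf_eq
    exact le_antisymm (le_trans hmain hzero) zero_le
  -- Gset is contained in the union of the H N
  have hGsub : E.Gset m p ⊆ ⋃ N : ℕ, H N := by
    rintro x ⟨hx01, htend⟩
    have hchoice : ∀ w' : Fin m → Fin E.g, ∃ N₀ : ℕ, ∀ n ≥ N₀,
        |E.freq w' x n - p w'| < ε / 4 := by
      intro w'
      have := Metric.tendsto_atTop.1 (htend w') (ε / 4) (by positivity)
      obtain ⟨N₀, hN₀⟩ := this
      exact ⟨N₀, fun n hn => by simpa [Real.dist_eq] using hN₀ n hn⟩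
    choose N₀f hN₀f using hchoice
    refine mem_iUnion.2 ⟨Finset.univ.sup N₀f, fun n hn => ⟨hx01, fun w' => ?_⟩⟩
    exact hN₀f w' n (le_trans (Finset.le_sup (Finset.mem_univ w')) hn)
  -- conclude
  have hGzero : μH[s] (E.Gset m p) = 0 := by
    have h1 : μH[s] (E.Gset m p) ≤ ∑' N : ℕ, μH[s] (H N) :=
      le_trans (measure_mono hGsub) (measure_iUnion_le _)
    simpa [hHmeas] using h1
  have hGinf : μH[s] (E.Gset m p) = ∞ := by
    have hd : ((s.toNNReal : ℝ≥0) : ℝ≥0∞) < dimH (E.Gset m p) := by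
      have heq : ENNReal.ofReal s = ((s.toNNReal : ℝ≥0) : ℝ≥0∞) := rfl
      rwa [heq] at hs
    have := hausdorffMeasure_of_lt_dimH hd
    rwa [Real.coe_toNNReal s hs0.le] at this
  rw [hGzero] at hGinf
  simp at hGinf

end ExpandingFullShift
open ExpandingFullShift in
/-- for `0 ≤ s < dim_H G^{f,m}_{p̄}` and every cylinder `C ⊆ [0,1)`,
`liminf_n N^s_∞(C ∩ G^{f,m}_{p̄}(n,ε)) ≥ |C|^s / K^{2s}`. -/
theorem liminf_cylMeasure_cylinder (E : ExpandingFullShift) (K : ℝ) (hK : 1 ≤ K)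
    (hbd : E.HasBoundedDistortion K)
    (m : ℕ) (hm : 0 < m) (p : (Fin m → Fin E.g) → ℝ) (hp : IsProbVector p)
    (ε : ℝ) (hε : 0 < ε) (w : List (Fin E.g))
    (s : ℝ) (hs0 : 0 ≤ s) (hs : ENNReal.ofReal s < dimH (E.Gset m p)) :
    volume (E.cylinder w) ^ s / ENNReal.ofReal (K ^ (2 * s))
      ≤ atTop.liminf (fun n => E.cylMeasure s (E.cylinder w ∩ E.GsetApprox m p n ε)) := by
  classical
  rcases eq_or_lt_of_le hs0 with hs0' | hs0'
  · -- the case s = 0 : every cylinder measure is infinite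
    have hval : ∀ n, E.cylMeasure s (E.cylinder w ∩ E.GsetApprox m p n ε) = ∞ := by
      intro n
      have h1 : ∀ c : ℕ → List (Fin E.g),
          ∑' i, volume (E.cylinder (c i)) ^ s = ∞ := by
        intro c
        have : ∀ i : ℕ, volume (E.cylinder (c i)) ^ s = 1 := by
          intro i; rw [← hs0', ENNReal.rpow_zero]
        rw [tsum_congr this]
        exact ENNReal.tsum_const_eq_top_of_ne_zero one_ne_zero
      simp [cylMeasure, h1]
    have heq : (fun n => E.cylMeasure s (E.cylinder w ∩ E.GsetApprox m p n ε)) =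
        fun _ => (∞ : ℝ≥0∞) := funext hval
    rw [heq, Filter.liminf_const]
    exact le_top
  -- now 0 < s
  rcases eq_or_ne (volume (E.cylinder w)) 0 with hv0 | hv0
  · rw [hv0, ENNReal.zero_rpow_of_pos hs0', ENNReal.zero_div]
    exact zero_le
  set volw := volume (E.cylinder w) with hvolw
  set K' := ENNReal.ofReal K with hK'
  have hKpos : (0:ℝ) < K := lt_of_lt_of_le one_pos hK
  have hK'0 : K' ≠ 0 := by
    rw [hK']; exact (ENNReal.ofReal_pos.2 hKpos).ne'
  have hK'top : K' ≠ ∞ := ENNReal.ofReal_ne_top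
  have hK'1 : 1 ≤ K' := ENNReal.one_le_ofReal.2 hK
  have hofr : ENNReal.ofReal (K ^ (2 * s)) = K' ^ (2 * s) := by
    rw [hK']; exact (ENNReal.ofReal_rpow_of_pos hKpos).symm
  rw [hofr]
  have hvol1 : volw ≤ 1 := E.volume_cylinder_le_one w
  have hvolfin : volw ≠ ∞ := (lt_of_le_of_lt hvol1 ENNReal.one_lt_top).ne
  have hvs0 : volw ^ s ≠ 0 := by
    simp [ENNReal.rpow_eq_zero_iff, hv0]
    intro h; exact absurd h hvolfin
  have hvs1 : volw ^ s ≤ 1 := by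
    calc volw ^ s ≤ 1 ^ s := ENNReal.rpow_le_rpow hvol1 hs0
      _ = 1 := ENNReal.one_rpow s
  have hvstop : volw ^ s ≠ ∞ := (lt_of_le_of_lt hvs1 ENNReal.one_lt_top).ne
  have hK2s1 : 1 ≤ K' ^ (2 * s) := by
    calc (1:ℝ≥0∞) = 1 ^ (2 * s) := (ENNReal.one_rpow _).symm
      _ ≤ K' ^ (2 * s) := ENNReal.rpow_le_rpow hK'1 (by positivity)
  have hK2stop : K' ^ (2 * s) ≠ ∞ := ENNReal.rpow_ne_top_of_nonneg (by positivity) hK'top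
  have hKs1 : 1 ≤ K' ^ s := by
    calc (1:ℝ≥0∞) = 1 ^ s := (ENNReal.one_rpow _).symm
      _ ≤ K' ^ s := ENNReal.rpow_le_rpow hK'1 hs0
  by_contra hcon
  rw [not_le] at hcon
  obtain ⟨c', hc'1, hc'2⟩ := exists_between hcon
  have hfreq : ∃ᶠ n in atTop,
      E.cylMeasure s (E.cylinder w ∩ E.GsetApprox m p n ε) < c' :=
    Filter.frequently_lt_of_liminf_lt (hu := by isBoundedDefault) hc'1
  have hcKvs : c' * K' ^ (2 * s) < volw ^ s := by
    refine (ENNReal.lt_div_iff_mul_lt (Or.inl ?_) (Or.inl hK2stop)).1 hc'2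
    exact fun h => by simp [h] at hK2s1
  have hc'vs : c' < volw ^ s := by
    calc c' = c' * 1 := (mul_one c').symm
      _ ≤ c' * K' ^ (2 * s) := mul_le_mul_right hK2s1 c'
      _ < volw ^ s := hcKvs
  set S := K' ^ s * c' / volw ^ s with hS
  have hρS : K' ^ s * S < 1 := by
    have he : K' ^ s * S = K' ^ (2 * s) * c' / volw ^ s := by
      rw [hS, ← mul_div_assoc, ← mul_assoc, ← ENNReal.rpow_add s s hK'0 hK'top, two_mul]
    rw [he]
    rw [ENNReal.div_lt_iff (Or.inl hvs0) (Or.inl hvstop), one_mul, mul_comm]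
    exact hcKvs
  -- build the hypothesis of `core`
  have Hyp : ∀ N : ℕ, ∃ (n : ℕ) (D : ℕ → List (Fin E.g)), N ≤ n ∧
      (E.GsetApprox m p n (ε / 2) ⊆ ⋃ i, E.cylinder (D i)) ∧
      ∑' i, volume (E.cylinder (D i)) ^ s ≤ S := by
    intro N
    set Nb := max N (m + 1 + Nat.ceil (8 * (w.length : ℝ) / ε)) with hNb
    obtain ⟨n, hn_ge, hn_lt⟩ := Filter.frequently_atTop.1 hfreq (Nb + w.length)
    set n' := n - w.length with hn'def
    have hnn' : n = n' + w.length := by omega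
    have hn'Nb : Nb ≤ n' := by omega
    have hcb := ceil_bound hε w.length m n' (by omega)
    simp only [cylMeasure, iInf_lt_iff] at hn_lt
    obtain ⟨u, hu_cov, hu_sum⟩ := hn_lt
    -- every relevant covering cylinder extends w
    have hwu : ∀ i x, x ∈ E.cylinder w → x ∈ E.GsetApprox m p n ε →
        x ∈ E.cylinder (u i) → w <+: u i := by
      intro i x hxw hxG hxu
      by_cases hlen : (u i).length ≤ w.length
      · exfalso
        have hsub : E.cylinder w ⊆ E.cylinder (u i) :=
          E.cylinder_subset_of_mem hxu hxw hlen
        have h2 : volw ^ s ≤ volume (E.cylinder (u i)) ^ s :=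
          ENNReal.rpow_le_rpow (measure_mono hsub) hs0
        have h3 : volume (E.cylinder (u i)) ^ s ≤
            ∑' j, volume (E.cylinder (u j)) ^ s := ENNReal.le_tsum i
        exact absurd (lt_of_le_of_lt (le_trans h2 h3) (lt_trans hu_sum hc'vs)) (lt_irrefl _)
      · exact E.prefix_of_mem_cylinder hxu hxw (by omega)
    set v : ℕ → List (Fin E.g) :=
      fun i => if w <+: u i then (u i).drop w.length else u i with hv
    refine ⟨n', v, by omega, ?_, ?_⟩
    · -- covering property
      intro y hy
      obtain ⟨x, hxw, hfx⟩ := E.exists_preimage w hy.1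
      have hy' : E.f^[w.length] x ∈ E.GsetApprox m p n' (ε / 2) := by rwa [hfx]
      have hxG : x ∈ E.GsetApprox m p n ε := by
        refine ⟨hxw.1, fun w' => ?_⟩
        have := E.preimage_mem_GsetApprox hy' hcb.1 hcb.2 hε w'
        rwa [← hnn'] at this
      obtain ⟨i, hi⟩ := mem_iUnion.1 (hu_cov ⟨hxw, hxG⟩)
      have hpre : w <+: u i := hwu i x hxw hxG hi
      obtain ⟨t, ht⟩ := hpre
      have hvi : v i = t := by
        rw [hv]; simp only
        rw [if_pos ⟨t, ht⟩, ← ht, List.drop_left]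
      refine mem_iUnion.2 ⟨i, ?_⟩
      rw [hvi]
      have hx2 : x ∈ E.cylinder (w ++ t) := by rwa [ht]
      have := (E.mem_cylinder_append).1 hx2
      rw [← hfx]
      exact this.2
    · -- sum bound
      have hterm : ∀ i, volume (E.cylinder (v i)) ^ s ≤
          K' ^ s / volw ^ s * volume (E.cylinder (u i)) ^ s := by
        intro i
        by_cases hpre : w <+: u i
        · obtain ⟨t, ht⟩ := hpre
          have hvi : v i = t := by
            rw [hv]; simp only
            rw [if_pos ⟨t, ht⟩, ← ht, List.drop_left]
          rw [hvi]
          have hb := (hbd w t).2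
          rw [ht] at hb
          have h1 : volume (E.cylinder t) ≤ K' * volume (E.cylinder (u i)) / volw := by
            rw [ENNReal.le_div_iff_mul_le (Or.inl hv0) (Or.inl hvolfin), mul_comm]
            exact hb
          calc volume (E.cylinder t) ^ s
              ≤ (K' * volume (E.cylinder (u i)) / volw) ^ s :=
                ENNReal.rpow_le_rpow h1 hs0
            _ = K' ^ s / volw ^ s * volume (E.cylinder (u i)) ^ s := by
                rw [ENNReal.div_rpow_of_nonneg _ _ hs0,
                  ENNReal.mul_rpow_of_nonneg _ _ hs0, div_eq_mul_inv, div_eq_mul_inv]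
                ring
        · have hvi : v i = u i := by rw [hv]; simp only; rw [if_neg hpre]
          rw [hvi]
          have h1 : 1 ≤ K' ^ s / volw ^ s := by
            rw [ENNReal.le_div_iff_mul_le (Or.inl hvs0) (Or.inl hvstop), one_mul]
            exact le_trans hvs1 hKs1
          calc volume (E.cylinder (u i)) ^ s
              = 1 * volume (E.cylinder (u i)) ^ s := (one_mul _).symm
            _ ≤ K' ^ s / volw ^ s * volume (E.cylinder (u i)) ^ s :=
                mul_le_mul_left h1 _
      calc ∑' i, volume (E.cylinder (v i)) ^ s
          ≤ ∑' i, K' ^ s / volw ^ s * volume (E.cylinder (u i)) ^ s :=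
            ENNReal.tsum_le_tsum hterm
        _ = K' ^ s / volw ^ s * ∑' i, volume (E.cylinder (u i)) ^ s :=
            ENNReal.tsum_mul_left
        _ ≤ K' ^ s / volw ^ s * c' := mul_le_mul_right hu_sum.le _
        _ = S := by rw [hS, div_eq_mul_inv, div_eq_mul_inv]; ring
  exact E.core hK hbd hε hs0' hs hρS Hyp
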